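/- Let K be algebraically closed of characteristic p, q = p^n, and define the K[G]-module W_j = span_K(θ_0, ..., θ_{j-1}) for the additive group G = 𝔽_q acting by σ_a(θ_i) = Σ_{l=0}^{i} C(i,l) a^{i-l} θ_l. Then each W_j, 1 ≤ j ≤ p^n, is an indecomposable K[G]-module. -/

import Mathlib

/-- Key lemma: any nonzero `G`-stable submodule of `W_j` contains `θ 0`. -/
lemma W_j_aux
    (p n : ℕ) [Fact p.Prime] (hn : 1 ≤ n)
    (K : Type) [Field K]
    (ι : GaloisField p n →+* K)
    (V : Type) [AddCommGroup V] [Module K V]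
    (θ : ℕ → V) (hθ : LinearIndependent K fun i : Fin (p ^ n) => θ i)
    (ρ : Representation K (Multiplicative (GaloisField p n)) V)
    (hρ : ∀ a : GaloisField p n, ∀ i < p ^ n,
      ρ (Multiplicative.ofAdd a) (θ i)
        = ∑ l ∈ Finset.range (i + 1), ((i.choose l : K) * (ι a) ^ (i - l)) • θ l)
    (j : ℕ) (hj2 : j ≤ p ^ n)
    (U : Submodule K V)
    (hU : U ≤ Submodule.span K (θ '' {i | i < j}))
    (hstab : ∀ a : GaloisField p n, ∀ v ∈ U, ρ (Multiplicative.ofAdd a) v ∈ U)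
    (hne : U ≠ ⊥) : θ 0 ∈ U := by
  classical
  have hq1 : 0 < p ^ n := pow_pos (Fact.out : p.Prime).pos n
  -- spans as ranges over Fin
  have hspan : ∀ m : ℕ, θ '' {i | i < m} = Set.range (fun i : Fin m => θ i) := by
    intro m; ext x; constructor
    · rintro ⟨i, hi, rfl⟩; exact ⟨⟨i, hi⟩, rfl⟩
    · rintro ⟨i, rfl⟩; exact ⟨i, i.2, rfl⟩
  -- minimal m with a nonzero element of U in W_m
  have hPex : ∃ m : ℕ, ∃ u, u ∈ U ∧ u ≠ 0 ∧ u ∈ Submodule.span K (θ '' {i | i < m}) := by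
    obtain ⟨u, huU, hu0⟩ := (Submodule.ne_bot_iff U).mp hne
    exact ⟨j, u, huU, hu0, hU huU⟩
  set m := Nat.find hPex with hm_def
  obtain ⟨u, huU, hu0, huspan⟩ := Nat.find_spec hPex
  rw [← hm_def] at huspan
  have hmin : ∀ k, k < m → ¬ ∃ u, u ∈ U ∧ u ≠ 0 ∧ u ∈ Submodule.span K (θ '' {i | i < k}) :=
    fun k hk => Nat.find_min hPex hk
  have hm1 : 1 ≤ m := by
    rcases Nat.eq_zero_or_pos m with h0 | h; swap; · exact h
    exfalso
    rw [h0] at huspan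
    have hempty : {i : ℕ | i < 0} = (∅ : Set ℕ) := by ext i; simp
    rw [hempty, Set.image_empty, Submodule.span_empty, Submodule.mem_bot] at huspan
    exact hu0 huspan
  have hmj : m ≤ j := by
    apply Nat.find_le
    obtain ⟨v, hvU, hv0⟩ := (Submodule.ne_bot_iff U).mp hne
    exact ⟨v, hvU, hv0, hU hvU⟩
  have hmq : m ≤ p ^ n := hmj.trans hj2
  -- coordinates of u
  rw [hspan, Submodule.mem_span_range_iff_exists_fun] at huspan
  obtain ⟨c, hc⟩ := huspan
  set d : ℕ → K := fun i => if h : i < m then c ⟨i, h⟩ else 0 with hd_def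
  have hd : ∀ i : Fin m, d (i : ℕ) = c i := by
    intro i; simp only [hd_def, i.2, dif_pos]
  have hu : ∑ i ∈ Finset.range m, d i • θ i = u := by
    rw [← Fin.sum_univ_eq_sum_range (fun i => d i • θ i) m, ← hc]
    exact Finset.sum_congr rfl fun i _ => by rw [hd]
  -- the action of ρ on u
  have hcomp : ∀ a : GaloisField p n, ρ (Multiplicative.ofAdd a) u - u
      = ∑ i ∈ Finset.range m, ∑ l ∈ Finset.range i,
          (d i * ((i.choose l : K) * (ι a) ^ (i - l))) • θ l := by
    intro a
    have step : ∀ i ∈ Finset.range m,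
        d i • (ρ (Multiplicative.ofAdd a)) (θ i)
          = (∑ l ∈ Finset.range i, (d i * ((i.choose l : K) * (ι a) ^ (i - l))) • θ l)
            + d i • θ i := by
      intro i hi
      rw [hρ a i (lt_of_lt_of_le (Finset.mem_range.mp hi) hmq), Finset.sum_range_succ,
        smul_add, Finset.smul_sum]
      congr 1
      · exact Finset.sum_congr rfl fun l _ => by rw [smul_smul]
      · rw [Nat.choose_self, Nat.sub_self, pow_zero, Nat.cast_one, one_mul, one_smul]
    have hrow : ρ (Multiplicative.ofAdd a) u
        = (∑ i ∈ Finset.range m, ∑ l ∈ Finset.range i,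
            (d i * ((i.choose l : K) * (ι a) ^ (i - l))) • θ l) + u := by
      conv_lhs => rw [← hu]
      rw [map_sum]
      have : ∀ i ∈ Finset.range m,
          (ρ (Multiplicative.ofAdd a)) (d i • θ i)
            = (∑ l ∈ Finset.range i, (d i * ((i.choose l : K) * (ι a) ^ (i - l))) • θ l)
              + d i • θ i := by
        intro i hi
        rw [map_smul]; exact step i hi
      rw [Finset.sum_congr rfl this, Finset.sum_add_distrib, hu]
    rw [hrow]; abel
  -- u is fixed by every group element
  have hfix : ∀ a : GaloisField p n, ρ (Multiplicative.ofAdd a) u = u := by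
    intro a
    by_contra hne'
    have hmem : ρ (Multiplicative.ofAdd a) u - u ∈ Submodule.span K (θ '' {i | i < m - 1}) := by
      rw [hcomp a]
      refine Submodule.sum_mem _ fun i hi => Submodule.sum_mem _ fun l hl => ?_
      refine Submodule.smul_mem _ _ (Submodule.subset_span ⟨l, ?_, rfl⟩)
      simp only [Finset.mem_range] at hi hl
      simp only [Set.mem_setOf_eq]
      omega
    have hmemU : ρ (Multiplicative.ofAdd a) u - u ∈ U :=
      Submodule.sub_mem _ (hstab a u huU) huU
    exact hmin (m - 1) (by omega)
      ⟨_, hmemU, sub_ne_zero_of_ne hne', hmem⟩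
  -- extract the coefficient of θ 0
  have hcoeff : ∀ a : GaloisField p n, ∑ i ∈ Finset.Ioo 0 m, d i * (ι a) ^ i = 0 := by
    intro a
    have h0 : ∑ i ∈ Finset.range m, ∑ l ∈ Finset.range i,
        (d i * ((i.choose l : K) * (ι a) ^ (i - l))) • θ l = 0 := by
      rw [← hcomp a, hfix a, sub_self]
    have hswap : ∑ i ∈ Finset.range m, ∑ l ∈ Finset.range i,
        (d i * ((i.choose l : K) * (ι a) ^ (i - l))) • θ l
        = ∑ l ∈ Finset.range (p ^ n), ∑ i ∈ Finset.Ioo l m,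
            (d i * ((i.choose l : K) * (ι a) ^ (i - l))) • θ l := by
      apply Finset.sum_comm'
      intro i l
      simp only [Finset.mem_range, Finset.mem_Ioo]
      omega
    have h1 : ∑ l : Fin (p ^ n),
        (∑ i ∈ Finset.Ioo (l : ℕ) m, d i * ((i.choose (l : ℕ) : K) * (ι a) ^ (i - (l : ℕ)))) • θ (l : ℕ)
        = 0 := by
      rw [Fin.sum_univ_eq_sum_range
        (fun l => (∑ i ∈ Finset.Ioo l m, d i * ((i.choose l : K) * (ι a) ^ (i - l))) • θ l) (p ^ n)]
      rw [← h0, hswap]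
      exact Finset.sum_congr rfl fun l _ => (Finset.sum_smul)
    have h2 := Fintype.linearIndependent_iff.mp hθ
      (fun l : Fin (p ^ n) =>
        ∑ i ∈ Finset.Ioo (l : ℕ) m, d i * ((i.choose (l : ℕ) : K) * (ι a) ^ (i - (l : ℕ)))) h1
    have h3 := h2 ⟨0, hq1⟩
    simpa using h3
  -- the polynomial vanishing at all points of the image of ι
  set Q : Polynomial K := ∑ i ∈ Finset.Ioo 0 m, Polynomial.C (d i) * Polynomial.X ^ i with hQ_def
  have hQeval : ∀ a : GaloisField p n, Q.eval (ι a) = 0 := by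
    intro a
    rw [hQ_def, Polynomial.eval_finset_sum]
    simpa using hcoeff a
  have : Fintype (GaloisField p n) := Fintype.ofFinite _
  have hcard : Fintype.card (GaloisField p n) = p ^ n := by
    rw [← Nat.card_eq_fintype_card]
    exact GaloisField.card p n (by omega)
  have hQdeg : Q.natDegree < p ^ n := by
    have hle : Q.natDegree ≤ m - 1 := by
      apply Polynomial.natDegree_sum_le_of_forall_le
      intro i hi
      simp only [Finset.mem_Ioo] at hi
      calc (Polynomial.C (d i) * Polynomial.X ^ i).natDegree
          ≤ (Polynomial.X ^ i : Polynomial K).natDegree := Polynomial.natDegree_C_mul_le _ _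
        _ = i := Polynomial.natDegree_X_pow i
        _ ≤ m - 1 := by omega
    omega
  have hQ0 : Q = 0 :=
    Polynomial.eq_zero_of_natDegree_lt_card_of_eval_eq_zero Q ι.injective hQeval
      (by rw [hcard]; exact hQdeg)
  have hd0 : ∀ i, 0 < i → i < m → d i = 0 := by
    intro i hi0 him
    have hco : Q.coeff i = d i := by
      rw [hQ_def, Polynomial.finset_sum_coeff]
      rw [Finset.sum_eq_single i]
      · simp [Polynomial.coeff_C_mul, Polynomial.coeff_X_pow]
      · intro b hb hbne
        simp [Polynomial.coeff_C_mul, Polynomial.coeff_X_pow, hbne.symm]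
      · intro hnotin
        exact absurd (Finset.mem_Ioo.mpr ⟨hi0, him⟩) hnotin
    rw [← hco, hQ0, Polynomial.coeff_zero]
  have hu0' : u = d 0 • θ 0 := by
    rw [← hu]
    rw [Finset.sum_eq_single_of_mem 0 (Finset.mem_range.mpr (by omega))]
    intro i hi hine
    rw [hd0 i (Nat.pos_of_ne_zero hine) (Finset.mem_range.mp hi), zero_smul]
  have hd00 : d 0 ≠ 0 := by
    intro h
    rw [h, zero_smul] at hu0'
    exact hu0 hu0'
  have hθ0 : θ 0 = (d 0)⁻¹ • u := by
    rw [hu0', smul_smul, inv_mul_cancel₀ hd00, one_smul]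
  rw [hθ0]
  exact Submodule.smul_mem _ _ huU

theorem W_j_indecomposable
    (p n : ℕ) [Fact p.Prime] (hn : 1 ≤ n)
    (K : Type) [Field K] [IsAlgClosed K] [CharP K p]
    (ι : GaloisField p n →+* K)
    (V : Type) [AddCommGroup V] [Module K V]
    (θ : ℕ → V) (hθ : LinearIndependent K fun i : Fin (p ^ n) => θ i)
    (ρ : Representation K (Multiplicative (GaloisField p n)) V)
    (hρ : ∀ a : GaloisField p n, ∀ i < p ^ n,
      ρ (Multiplicative.ofAdd a) (θ i)
        = ∑ l ∈ Finset.range (i + 1), ((i.choose l : K) * (ι a) ^ (i - l)) • θ l) :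
    ∀ j, 1 ≤ j → j ≤ p ^ n →
      (∀ a : GaloisField p n, ∀ v ∈ Submodule.span K (θ '' {i | i < j}),
        ρ (Multiplicative.ofAdd a) v ∈ Submodule.span K (θ '' {i | i < j})) ∧
      ¬ ∃ A B : Submodule K V,
        A ≤ Submodule.span K (θ '' {i | i < j}) ∧ B ≤ Submodule.span K (θ '' {i | i < j}) ∧
        (∀ a : GaloisField p n, ∀ v ∈ A, ρ (Multiplicative.ofAdd a) v ∈ A) ∧
        (∀ a : GaloisField p n, ∀ v ∈ B, ρ (Multiplicative.ofAdd a) v ∈ B) ∧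
        A ⊔ B = Submodule.span K (θ '' {i | i < j}) ∧ A ⊓ B = ⊥ ∧ A ≠ ⊥ ∧ B ≠ ⊥ := by
  intro j hj1 hj2
  have hq1 : 0 < p ^ n := pow_pos (Fact.out : p.Prime).pos n
  constructor
  · intro a v hv
    induction hv using Submodule.span_induction with
    | mem x hx =>
        obtain ⟨i, hi, rfl⟩ := hx
        rw [hρ a i (lt_of_lt_of_le hi hj2)]
        apply Submodule.sum_mem
        intro l hl
        apply Submodule.smul_mem
        refine Submodule.subset_span ⟨l, ?_, rfl⟩
        simp only [Finset.mem_range] at hl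
        simp only [Set.mem_setOf_eq] at hi
        simp only [Set.mem_setOf_eq]
        omega
    | zero => simp
    | add x y _ _ hx hy => rw [map_add]; exact Submodule.add_mem _ hx hy
    | smul t x _ hx => rw [map_smul]; exact Submodule.smul_mem _ t hx
  · rintro ⟨A, B, hA, hB, hAs, hBs, hsup, hinf, hA0, hB0⟩
    have h0A := W_j_aux p n hn K ι V θ hθ ρ hρ j hj2 A hA hAs hA0
    have h0B := W_j_aux p n hn K ι V θ hθ ρ hρ j hj2 B hB hBs hB0
    have hmem : θ 0 ∈ A ⊓ B := ⟨h0A, h0B⟩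
    rw [hinf, Submodule.mem_bot] at hmem
    exact hθ.ne_zero ⟨0, hq1⟩ hmem
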